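/- Let q ∈ ℂ ∖ {0, 1} and let a, c, d, b ∈ ℂ with a ≠ c. Let A = P(a, c) (the idempotent with kernel spanned by (a,1)ᵀ and image spanned by (c,1)ᵀ), and suppose there exists t ∈ ℂ such that (I − q⁻¹·A)·(d, 1)ᵀ = t·(b, 1)ᵀ. Then (d − a)·(c − b) = q·(a − c)·(b − d); that is, with a = z_{k,m}, c = z_{k+1,m}, d = z_{k,m+1}, b = z_{k+1,m+1}, the cross-ratio [z_{k,m+1} : z_{k,m} : z_{k+1,m} : z_{k+1,m+1}] equals q. (This is the elementary computation concluding the proof of Proposition 3.8: a matrix A with kernel z_{k,m}, image z_{k+1,m} = kernel(I − A), such that I − q⁻¹A maps z_{k,m+1} to z_{k+1,m+1}, forces the cross-ratio condition.) -/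
import Mathlib


open Matrix

/-- For distinct `u w : ℂ`, `Pmat u w = (w − u)⁻¹ • [[w, −u·w], [1, −u]]` is the unique
idempotent 2×2 matrix with kernel spanned by `(u, 1)ᵀ` and image spanned by `(w, 1)ᵀ`. -/
noncomputable def Pmat (u w : ℂ) : Matrix (Fin 2) (Fin 2) ℂ :=
  (w - u)⁻¹ • !![w, -(u * w); 1, -u]

/-- The elementary computation concluding Proposition 3.8: if `A = P(a, c)` and
`(I − q⁻¹·A)·(d, 1)ᵀ = t·(b, 1)ᵀ` for some `t`, then `(d − a)·(c − b) = q·(a − c)·(b − d)`,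
i.e. the cross-ratio `[d : a : c : b] = q`. -/
theorem proj_forces_crossRatio (q a c d b : ℂ) (hq0 : q ≠ 0) (hq1 : q ≠ 1)
    (hac : a ≠ c) (t : ℂ)
    (ht : ((1 : Matrix (Fin 2) (Fin 2) ℂ) - q⁻¹ • Pmat a c) *ᵥ ![d, 1] = t • ![b, 1]) :
    (d - a) * (c - b) = q * ((a - c) * (b - d)) := by
  have hca : c - a ≠ 0 := sub_ne_zero.mpr (Ne.symm hac)
  have h0 := congrFun ht 0
  have h1 := congrFun ht 1
  simp [Pmat, mulVec, Matrix.sub_apply, Matrix.one_apply, Fin.sum_univ_two,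
    Matrix.smul_apply, dotProduct] at h0 h1
  have ht' : t * (q * (c - a)) = q * (c - a) - (d - a) := by
    rw [← h1]; field_simp; ring
  have h0' : d * (q * (c - a)) - (c * d - a * c) = t * b * (q * (c - a)) := by
    rw [← h0]; field_simp; ring
  linear_combination -h0' - b * ht'
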